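/- In the good/bad/ugly setting, for every i with 0 ≤ i ≤ m one has Π_bad A^i = Π_bad ugly^i, and consequently ‖Π_bad A^i‖ ≤ ‖ugly^i‖. -/

import Mathlib

theorem welded_tree_proj_bad_A_eq_proj_bad_ugly
    {{H : Type*}} [NormedAddCommGroup H] [InnerProductSpace ℂ H]
    (m : ℕ) (C : ℕ → (H ≃ₗᵢ[ℂ] H))
    (P : H →L[ℂ] H)
    (hPidem : ∀ x : H, P (P x) = P x)
    (hPsa : ∀ x y : H, (inner ℂ (P x) y : ℂ) = inner ℂ x (P y))
    (ψ0 : H) (hψ0 : ‖ψ0‖ = 1) (hψ0bad : P ψ0 = 0)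
    (A good bad ugly : ℕ → H)
    (hA0 : A 0 = ψ0)
    (hA : ∀ i : ℕ, 1 ≤ i → i ≤ m → A i = C i (A (i - 1)))
    (hgood0 : good 0 = ψ0) (hbad0 : bad 0 = 0) (hugly0 : ugly 0 = 0)
    (hgood : ∀ i : ℕ, 1 ≤ i → i ≤ m →
      good i = C i (good (i - 1)) - P (C i (good (i - 1))))
    (hbad : ∀ i : ℕ, 1 ≤ i → i ≤ m → bad i = P (C i (good (i - 1))))
    (hugly : ∀ i : ℕ, 1 ≤ i → i ≤ m → ugly i = bad i + C i (ugly (i - 1))) :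
    ∀ i : ℕ, i ≤ m →
      P (A i) = P (ugly i) ∧ ‖P (A i)‖ ≤ ‖ugly i‖ := by
  -- norm bound for P
  have hPle : ∀ x : H, ‖P x‖ ≤ ‖x‖ := by
    intro x
    by_cases h : P x = 0
    · simp [h]
    · have h1 : (‖P x‖ : ℝ) ^ 2 = Complex.re (inner ℂ (P x) (P x) : ℂ) :=
        (inner_self_eq_norm_sq (𝕜 := ℂ) (P x)).symm
      have h2 : (inner ℂ (P x) (P x) : ℂ) = inner ℂ x (P x) := by
        rw [hPsa]; rw [hPidem]
      have h3 : Complex.re (inner ℂ x (P x) : ℂ) ≤ ‖x‖ * ‖P x‖ := by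
        calc Complex.re (inner ℂ x (P x) : ℂ) ≤ ‖(inner ℂ x (P x) : ℂ)‖ :=
              Complex.re_le_norm _
          _ ≤ ‖x‖ * ‖P x‖ := norm_inner_le_norm _ _
      have h4 : ‖P x‖ ^ 2 ≤ ‖x‖ * ‖P x‖ := by rw [h1, h2]; exact h3
      have hpos : 0 < ‖P x‖ := norm_pos_iff.mpr h
      nlinarith
  -- main induction: A i = good i + ugly i and P (good i) = 0
  have key : ∀ i : ℕ, i ≤ m → A i = good i + ugly i ∧ P (good i) = 0 := by
    intro i
    induction i with
    | zero => intro _; simp [hA0, hgood0, hugly0, hψ0bad]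
    | succ n ih =>
      intro hnm
      have h1 : 1 ≤ n + 1 := Nat.le_add_left 1 n
      have hn : n ≤ m := Nat.le_of_succ_le hnm
      obtain ⟨ihA, ihP⟩ := ih hn
      have hs : n + 1 - 1 = n := rfl
      have hAeq : A (n+1) = good (n+1) + ugly (n+1) := by
        rw [hA (n+1) h1 hnm, hgood (n+1) h1 hnm, hugly (n+1) h1 hnm,
          hbad (n+1) h1 hnm, hs, ihA, map_add]
        abel
      refine ⟨hAeq, ?_⟩
      rw [hgood (n+1) h1 hnm, hs, map_sub, hPidem, sub_self]
  intro i him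
  obtain ⟨hAeq, hPg⟩ := key i him
  have heq : P (A i) = P (ugly i) := by rw [hAeq, map_add, hPg, zero_add]
  exact ⟨heq, heq ▸ hPle (ugly i)⟩
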